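/- For all natural numbers k, d, ℓ with ℓ ≥ 1, every ℓ-pseudo-cube B ⊆ [k]^d satisfies |B| ≥ ℓ^d. -/

import Mathlib

/-- `B` is an `ℓ`-pseudo-cube: `B` is nonempty and for every `v ∈ B` and every coordinate
`i`, there exist at least `ℓ - 1` distinct vectors `u ∈ U` with `u ≠ v` that agree with `v`
on all coordinates except (possibly) `i`. -/
def IsPseudoCube {ι α : Type*} (ℓ : ℕ) (B : Set (ι → α)) : Prop :=
  B.Nonempty ∧ ∀ v ∈ B, ∀ i : ι, ∃ U : Finset (ι → α), U.card = ℓ - 1 ∧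
    ∀ u ∈ U, u ∈ B ∧ u ≠ v ∧ ∀ j, j ≠ i → u j = v j

theorem pseudocube_aux : ∀ (d : ℕ) (ι : Type) [Fintype ι] [DecidableEq ι],
    Fintype.card ι = d → ∀ (k ℓ : ℕ), 1 ≤ ℓ → ∀ (B : Set (ι → Fin k)),
    IsPseudoCube ℓ B → ℓ ^ d ≤ B.ncard := by
  intro d
  induction d with
  | zero =>
    intro ι _ _ hι k ℓ hℓ B hB
    rw [pow_zero]; exact (Set.ncard_pos B.toFinite).2 hB.1
  | succ d ih =>
    intro ι _ _ hι k ℓ hℓ B hB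
    classical
    have hne : Nonempty ι := Fintype.card_pos_iff.mp (by omega)
    obtain ⟨i⟩ := hne
    set ι' := {j : ι // j ≠ i} with hι'
    have hcard : Fintype.card ι' = d := by
      show Fintype.card {j : ι // ¬ (j = i)} = d
      rw [Fintype.card_subtype_compl, Fintype.card_subtype_eq]
      omega
    set π : (ι → Fin k) → (ι' → Fin k) := fun v j => v j.1 with hπ
    set P : Set (ι' → Fin k) := π '' B with hP
    -- P is a pseudo-cube
    have hPpc : IsPseudoCube ℓ P := by
      constructor
      · exact hB.1.image π
      · rintro p ⟨v, hv, rfl⟩ j'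
        obtain ⟨U, hUcard, hU⟩ := hB.2 v hv j'.1
        refine ⟨U.image π, ?_, ?_⟩
        · rw [Finset.card_image_of_injOn, hUcard]
          intro u₁ h₁ u₂ h₂ hpe
          obtain ⟨_, _, ha₁⟩ := hU u₁ h₁
          obtain ⟨_, _, ha₂⟩ := hU u₂ h₂
          funext j
          by_cases hj : j = i
          · subst hj
            rw [ha₁ j (Ne.symm j'.2), ha₂ j (Ne.symm j'.2)]
          · exact congrFun hpe ⟨j, hj⟩
        · intro q hq
          obtain ⟨u, hu, rfl⟩ := Finset.mem_image.mp hq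
          obtain ⟨huB, huv, hua⟩ := hU u hu
          refine ⟨⟨u, huB, rfl⟩, ?_, ?_⟩
          · intro hpe
            apply huv
            funext j
            by_cases hj : j = i
            · subst hj; exact hua j (Ne.symm j'.2)
            · exact congrFun hpe ⟨j, hj⟩
          · intro j hj
            exact hua j.1 (fun h => hj (Subtype.ext h))
    have hPle : ℓ ^ d ≤ P.ncard := ih ι' hcard k ℓ hℓ P hPpc
    -- fiber counting
    have hmain : ℓ * P.ncard ≤ B.ncard := by
      rw [Set.ncard_eq_toFinset_card' B, Set.ncard_eq_toFinset_card' P]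
      have himg : P.toFinset = B.toFinset.image π := by
        ext x; simp [hP]
      rw [himg]
      apply Finset.mul_card_image_le_card
      intro b hb
      rw [← himg] at hb
      obtain ⟨v, hv, hvb⟩ := by simpa [hP] using hb
      obtain ⟨U, hUcard, hU⟩ := hB.2 v hv i
      have hvU : v ∉ U := fun h => (hU v h).2.1 rfl
      have hsub : insert v U ⊆ B.toFinset.filter (fun a => π a = b) := by
        intro u hu
        rcases Finset.mem_insert.mp hu with rfl | hu
        · simp [hv, hvb]
        · obtain ⟨huB, _, hua⟩ := hU u hu
          simp only [Finset.mem_filter, Set.mem_toFinset]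
          refine ⟨huB, ?_⟩
          rw [← hvb]
          funext j
          exact hua j.1 j.2
      calc ℓ = (insert v U).card := by rw [Finset.card_insert_of_notMem hvU, hUcard]; omega
        _ ≤ _ := Finset.card_le_card hsub
    calc ℓ ^ (d + 1) = ℓ * ℓ ^ d := by ring
      _ ≤ ℓ * P.ncard := Nat.mul_le_mul_left ℓ hPle
      _ ≤ B.ncard := hmain

/-- Every `ℓ`-pseudo-cube `B ⊆ [k]^d` has at least `ℓ^d` elements. -/
theorem pseudocube_card_lower_bound (k d ℓ : ℕ) (hℓ : 1 ≤ ℓ)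
    (B : Set (Fin d → Fin k)) (hB : IsPseudoCube ℓ B) :
    ℓ ^ d ≤ B.ncard := by
  exact pseudocube_aux d (Fin d) (Fintype.card_fin d) k ℓ hℓ B hB
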